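/- Let X be a connected graph whose vertex set is ℤ^d (d ≥ 1) with the ℓ^∞ adjacency (x ~ y iff ‖x−y‖_∞ = 1), and let S be a finite connected subset of vertices such that the origin o lies in a finite component of the complement of S, with |S| = n. Then S contains a point of the positive coordinate axis {(j,0,…,0) : j ≥ 1} at distance at most n from the origin, i.e., S contains (j,0,…,0) for some 1 ≤ j ≤ n. -/

import Mathlib

/-- The graph on `ℤ^d` where `x ~ y` iff `‖x - y‖_∞ = 1` (adjacency including diagonals). -/
def boxGraph (d : ℕ) : SimpleGraph (Fin d → ℤ) where
  Adj x y := x ≠ y ∧ ∀ i, |x i - y i| ≤ 1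
  symm := by
    constructor
    intro x y ⟨hne, h⟩
    exact ⟨hne.symm, fun i => by rw [abs_sub_comm]; exact h i⟩
  loopless := by constructor; intro x ⟨hne, _⟩; exact hne rfl

theorem stmt_11 (d : ℕ) (hd : 1 ≤ d) (S : Set (Fin d → ℤ)) (hSfin : S.Finite)
    (hSconn : ((boxGraph d).induce S).Connected)
    (n : ℕ) (hn : S.ncard = n)
    (h0 : (0 : Fin d → ℤ) ∉ S)
    (hsep : (((boxGraph d).induce Sᶜ).connectedComponentMk ⟨0, h0⟩).supp.Finite) :
    ∃ j : ℤ, 1 ≤ j ∧ j ≤ (n : ℤ) ∧ (fun i : Fin d => if (i : ℕ) = 0 then j else 0) ∈ S := by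
  classical
  set e : ℤ → (Fin d → ℤ) := fun j i => if (i : ℕ) = 0 then j else 0 with he
  set i0 : Fin d := ⟨0, hd⟩ with hi0
  have he0 : ∀ j, e j i0 = j := fun j => by simp [he, hi0]
  have hezero : e 0 = 0 := by
    funext i; simp [he]
  -- every axis ray hits S
  have key : ∀ ε : ℤ, |ε| = 1 → ∃ m : ℕ, 1 ≤ m ∧ e (ε * m) ∈ S := by
    intro ε hε
    have hε0 : ε ≠ 0 := by intro h; simp [h] at hε
    by_contra h
    push_neg at h
    have hmem : ∀ m : ℕ, e (ε * m) ∈ Sᶜ := by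
      intro m
      rcases Nat.eq_zero_or_pos m with hm | hm
      · subst hm; simpa [hezero] using h0
      · exact h m hm
    have hadj : ∀ m : ℕ, (boxGraph d).Adj (e (ε * m)) (e (ε * (m + 1))) := by
      intro m
      constructor
      · intro hEq
        have := congrFun hEq i0
        rw [he0, he0] at this
        have : ε * (m : ℤ) = ε * ((m : ℤ) + 1) := by exact_mod_cast this
        have := mul_left_cancel₀ hε0 this
        omega
      · intro i
        by_cases hi : (i : ℕ) = 0
        · have : e (ε * m) i - e (ε * (m+1)) i = -ε := by
            simp [he, hi]; ring
          rw [this, abs_neg, hε]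
        · simp [he, hi]
    have hreach : ∀ m : ℕ,
        ((boxGraph d).induce Sᶜ).Reachable ⟨0, h0⟩ ⟨e (ε * m), hmem m⟩ := by
      intro m
      induction m with
      | zero =>
        have : (⟨0, h0⟩ : ↥Sᶜ) = ⟨e (ε * ((0:ℕ):ℤ)), hmem 0⟩ := by
          apply Subtype.ext; simp [hezero]
        exact this ▸ SimpleGraph.Reachable.refl _
      | succ k ih =>
        refine ih.trans (SimpleGraph.Adj.reachable ?_)
        show (boxGraph d).Adj (e (ε * k)) (e (ε * (k + 1)))
        exact_mod_cast hadj k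
    have hinf : (((boxGraph d).induce Sᶜ).connectedComponentMk ⟨0, h0⟩).supp.Infinite := by
      refine Set.infinite_of_injective_forall_mem
        (f := fun m : ℕ => (⟨e (ε * m), hmem m⟩ : ↥Sᶜ)) ?_ ?_
      · intro a b hab
        have := congrFun (congrArg Subtype.val hab) i0
        simp only [he0] at this
        have := mul_left_cancel₀ hε0 this
        exact_mod_cast this
      · intro m
        rw [SimpleGraph.ConnectedComponent.mem_supp_iff]
        exact SimpleGraph.ConnectedComponent.sound (hreach m).symm
    exact hinf hsep
  obtain ⟨j, hj1, hjS⟩ := key 1 (by norm_num)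
  obtain ⟨k, hk1, hkS⟩ := key (-1) (by norm_num)
  simp only [one_mul] at hjS
  have hkS' : e (-(k : ℤ)) ∈ S := by simpa using hkS
  -- distance bound along walks
  have wbound : ∀ (a b : ↥S) (w : ((boxGraph d).induce S).Walk a b),
      |(a : Fin d → ℤ) i0 - (b : Fin d → ℤ) i0| ≤ (w.length : ℤ) := by
    intro a b w
    induction w with
    | nil => simp
    | @cons u v x hadj w ih =>
      have h1 : |(u : Fin d → ℤ) i0 - (v : Fin d → ℤ) i0| ≤ 1 := hadj.2 i0
      calc |(u : Fin d → ℤ) i0 - (x : Fin d → ℤ) i0|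
          ≤ |(u : Fin d → ℤ) i0 - (v : Fin d → ℤ) i0|
            + |(v : Fin d → ℤ) i0 - (x : Fin d → ℤ) i0| := abs_sub_le _ _ _
        _ ≤ 1 + (w.length : ℤ) := add_le_add h1 ih
        _ = ((w.length + 1 : ℕ) : ℤ) := by push_cast; ring
        _ = ((SimpleGraph.Walk.cons hadj w).length : ℤ) := by
            rw [SimpleGraph.Walk.length_cons]
  haveI := hSfin.fintype
  have hcard : Fintype.card ↥S = n := by
    rw [← hn, Set.ncard_eq_toFinset_card']
    exact (Set.toFinset_card S).symm
  obtain ⟨w⟩ := hSconn.preconnected ⟨e j, hjS⟩ ⟨e (-(k : ℤ)), hkS'⟩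
  have hplen : w.toPath.1.length < n := by
    rw [← hcard]
    exact w.toPath.2.length_lt
  have hb := wbound _ _ w.toPath.1
  simp only [he0] at hb
  have hjk : (j : ℤ) + k ≤ (w.toPath.1.length : ℤ) := by
    have : |(j : ℤ) - (-(k : ℤ))| = (j : ℤ) + k := by
      rw [abs_of_nonneg] <;> omega
    omega
  refine ⟨(j : ℤ), by exact_mod_cast hj1, ?_, hjS⟩
  have : (w.toPath.1.length : ℤ) < n := by exact_mod_cast hplen
  omega
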